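/- Let f : [0,∞) → [0,1] be non-decreasing. Suppose there exist 0 < α₁ < α₀ such that (i) f is concave on [0,α₀], and (ii) every subgradient slope m of f at α₁ (i.e., −m ∈ ∂(−f)(α₁)) satisfies m ≥ (1 − f(α₁))/(α₀ − α₁), in the sense that −sup(∂(−f)(α₁)) ≥ (1 − f(α₁))/(α₀ − α₁). Then for any nonnegative random variable X with E[X] ≤ α₁, we have f(E[X]) ≥ E[f(X)]. -/

import Mathlib

open MeasureTheory Set

/-- A concave function on `[0, α₀]` has a supporting line from above at any
interior point `p ∈ (0, α₀)`. -/
lemma exists_support_line (f : ℝ → ℝ) (α₀ : ℝ) (hconc : ConcaveOn ℝ (Icc 0 α₀) f)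
    {p : ℝ} (hp0 : 0 < p) (hpα : p < α₀) :
    ∃ m : ℝ, ∀ x ∈ Icc (0:ℝ) α₀, f x ≤ f p + m * (x - p) := by
  set S : Set ℝ := (fun x => (f p - f x) / (p - x)) '' Ico 0 p with hS
  have hpmem : p ∈ Icc (0:ℝ) α₀ := ⟨hp0.le, hpα.le⟩
  have hαmem : α₀ ∈ Icc (0:ℝ) α₀ := ⟨(hp0.trans hpα).le, le_refl _⟩
  have hne : S.Nonempty := ⟨_, ⟨0, ⟨le_refl _, hp0⟩, rfl⟩⟩
  have hbdd : BddBelow S := by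
    refine ⟨(f α₀ - f p) / (α₀ - p), ?_⟩
    rintro s ⟨x, hx, rfl⟩
    exact hconc.slope_anti_adjacent ⟨hx.1, (hx.2.trans hpα).le⟩ hαmem hx.2 hpα
  refine ⟨sInf S, fun x hx => ?_⟩
  rcases lt_trichotomy x p with h | h | h
  · have hle : sInf S ≤ (f p - f x) / (p - x) :=
      csInf_le hbdd ⟨x, ⟨hx.1, h⟩, rfl⟩
    have hpx : 0 < p - x := by linarith
    have := (div_le_div_iff_of_pos_right hpx).mpr hle
    nlinarith [ (le_div_iff₀ hpx).mp hle ]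
  · subst h; simp
  · have hle : (f x - f p) / (x - p) ≤ sInf S := by
      refine le_csInf hne ?_
      rintro s ⟨q, hq, rfl⟩
      exact hconc.slope_anti_adjacent ⟨hq.1, (hq.2.trans hpα).le⟩ hx hq.2 h
    have hxp : 0 < x - p := by linarith
    nlinarith [(div_le_iff₀ hxp).mp hle]

theorem stmt_5 {Ω : Type*} [MeasurableSpace Ω] (μ : Measure Ω) [IsProbabilityMeasure μ]
    (f : ℝ → ℝ) (α₀ α₁ : ℝ) (h0 : 0 < α₁) (h1 : α₁ < α₀)
    (hmono : MonotoneOn f (Ici 0))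
    (hrange : ∀ x ∈ Ici (0:ℝ), f x ∈ Icc (0:ℝ) 1)
    (hconc : ConcaveOn ℝ (Icc 0 α₀) f)
    (hsubgrad : ∀ m : ℝ, (∀ x ∈ Icc (0:ℝ) α₀, f x ≤ f α₁ + m * (x - α₁)) →
      (1 - f α₁) / (α₀ - α₁) ≤ m)
    (X : Ω → ℝ) (hXint : Integrable X μ) (hXpos : ∀ᵐ ω ∂μ, 0 ≤ X ω)
    (hfXint : Integrable (fun ω => f (X ω)) μ)
    (hEX : ∫ ω, X ω ∂μ ≤ α₁) :
    ∫ ω, f (X ω) ∂μ ≤ f (∫ ω, X ω ∂μ) := by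
  set p : ℝ := ∫ ω, X ω ∂μ with hp
  have hp0 : 0 ≤ p := integral_nonneg_of_ae hXpos
  have hfα₁ : f α₁ ≤ 1 := (hrange α₁ h0.le).2
  have hc0 : 0 ≤ (1 - f α₁) / (α₀ - α₁) := div_nonneg (by linarith) (by linarith)
  rcases eq_or_lt_of_le hp0 with hp0' | hp0'
  · -- p = 0 : X = 0 a.e.
    have hX0 : X =ᵐ[μ] 0 := (integral_eq_zero_iff_of_nonneg_ae hXpos hXint).mp hp0'.symm
    have : (fun ω => f (X ω)) =ᵐ[μ] (fun _ => f 0) := by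
      filter_upwards [hX0] with ω hω
      simp [hω]
    rw [integral_congr_ae this, integral_const, probReal_univ, ← hp0']
    simp
  · -- p > 0
    obtain ⟨m', hm'⟩ := exists_support_line f α₀ hconc hp0' (lt_of_le_of_lt hEX h1)
    -- key : 1 ≤ f p + m' * (α₀ - p) and 0 ≤ m'
    have hdiv : (1 - f α₁) / (α₀ - α₁) * (α₀ - α₁) = 1 - f α₁ :=
      div_mul_cancel₀ _ (by linarith)
    have key : 1 ≤ f p + m' * (α₀ - p) ∧ 0 ≤ m' := by
      rcases eq_or_lt_of_le hEX with hpe | hpl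
      · have hc : (1 - f α₁) / (α₀ - α₁) ≤ m' := by
          apply hsubgrad
          intro x hx
          have := hm' x hx
          rw [hpe] at this
          exact this
        constructor
        · have := mul_le_mul_of_nonneg_right hc (by linarith : (0:ℝ) ≤ α₀ - α₁)
          rw [hdiv] at this
          rw [hpe]
          linarith
        · linarith
      · obtain ⟨m₁, hm₁⟩ := exists_support_line f α₀ hconc h0 h1
        have hc1 : (1 - f α₁) / (α₀ - α₁) ≤ m₁ := hsubgrad m₁ hm₁
        have ha : f p ≤ f α₁ + m₁ * (p - α₁) :=
          hm₁ p ⟨hp0, by linarith⟩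
        have hb : f α₁ ≤ f p + m' * (α₁ - p) :=
          hm' α₁ ⟨h0.le, h1.le⟩
        have hm'm₁ : m₁ ≤ m' := by nlinarith
        have hcm' : (1 - f α₁) / (α₀ - α₁) ≤ m' := hc1.trans hm'm₁
        constructor
        · have := mul_le_mul_of_nonneg_right hcm' (by linarith : (0:ℝ) ≤ α₀ - α₁)
          rw [hdiv] at this
          nlinarith
        · linarith
    obtain ⟨hkey, hm'0⟩ := key
    -- global bound : ∀ x ≥ 0, f x ≤ f p + m' * (x - p)
    have hglob : ∀ x : ℝ, 0 ≤ x → f x ≤ f p + m' * (x - p) := by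
      intro x hx
      rcases le_or_gt x α₀ with hxa | hxa
      · exact hm' x ⟨hx, hxa⟩
      · have h1x : f x ≤ 1 := (hrange x hx).2
        nlinarith
    have hint2 : Integrable (fun ω => f p + m' * (X ω - p)) μ :=
      (integrable_const _).add (((hXint.sub (integrable_const _)).const_mul m'))
    have hmono' : ∫ ω, f (X ω) ∂μ ≤ ∫ ω, (f p + m' * (X ω - p)) ∂μ := by
      apply integral_mono_ae hfXint hint2
      filter_upwards [hXpos] with ω hω
      exact hglob _ hω
    have hintsub : Integrable (fun ω => m' * (X ω - p)) μ :=
      (hXint.sub (integrable_const p)).const_mul m'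
    have hcalc : ∫ ω, (f p + m' * (X ω - p)) ∂μ = f p := by
      rw [integral_add (integrable_const _) hintsub, integral_const_mul,
        integral_sub hXint (integrable_const _), integral_const, integral_const,
        probReal_univ]
      simp [hp]
    rw [hcalc] at hmono'
    exact hmono'
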